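/- Let (Ω, ℱ, ℙ) be a probability space, 𝒲 a finite type, and W : Ω → 𝒲 measurable with ℙ(W = w) > 0 for every w ∈ 𝒲. Let Y : ℝ × Ω → ℝ be jointly measurable such that for every ω the map x ↦ Y(x, ω) is differentiable with derivative D(x, ω), where D is jointly measurable and |D(x, ω)| ≤ C for all x, ω. Let A, B : Ω → ℝ be integrable random variables such that for every w ∈ 𝒲 and every x ∈ ℝ, under the conditional probability measure ℙ(· | {W = w}) the random variables ω ↦ 𝟙_{[A(ω),∞)}(x) − 𝟙_{[B(ω),∞)}(x) and ω ↦ D(x, ω) are independent. Then 𝔼[Y(B(·), ·) − Y(A(·), ·)] = ∑_{w ∈ 𝒲} ℙ(W = w) · ∫_ℝ (F_A^w(x) − F_B^w(x))·𝔼^w[D(x, ·)] dx, where F_A^w(x) = ℙ(A ≤ x | W = w) and 𝔼^w denotes expectation under ℙ(· | {W = w}). -/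

import Mathlib

open MeasureTheory Set ProbabilityTheory


lemma ind_diff_eq (a b x : ℝ) (hxa : x ≠ a) (hxb : x ≠ b) (v : ℝ) :
    ((Ici a).indicator (fun _ => (1:ℝ)) x - (Ici b).indicator (fun _ => (1:ℝ)) x) * v
      = (Ioc a b).indicator (fun _ => v) x - (Ioc b a).indicator (fun _ => v) x := by
  rcases lt_or_gt_of_ne hxa with h1 | h1 <;> rcases lt_or_gt_of_ne hxb with h2 | h2 <;>
    simp [Set.indicator_apply, Set.mem_Ici, Set.mem_Ioc, h1, h2, h1.le, h2.le,
      not_le.mpr h1, not_le.mpr h2, h1.not_ge, h2.not_ge]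

lemma ind_ae (a b : ℝ) (v : ℝ → ℝ) :
    (fun x => ((Ici a).indicator (fun _ => (1:ℝ)) x - (Ici b).indicator (fun _ => (1:ℝ)) x) * v x)
      =ᵐ[volume] fun x => (Ioc a b).indicator v x - (Ioc b a).indicator v x := by
  have h : volume ({a, b} : Set ℝ) = 0 := ((Set.finite_singleton b).insert a).measure_zero _
  filter_upwards [measure_eq_zero_iff_ae_notMem.mp h] with x hx
  simp only [Set.mem_insert_iff, Set.mem_singleton_iff, not_or] at hx
  simpa [Set.indicator_apply] using ind_diff_eq a b x hx.1 hx.2 (v x)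

lemma ioc_int {ψ : ℝ → ℝ} (hψ : Measurable ψ) {C : ℝ} (hC : ∀ x, |ψ x| ≤ C) (a b : ℝ) :
    IntegrableOn ψ (Ioc a b) volume := by
  refine Integrable.mono' (integrable_const C) (hψ.aestronglyMeasurable.restrict) ?_
  exact Filter.Eventually.of_forall fun x => hC x

lemma aux_int {ψ : ℝ → ℝ} (hψ : Measurable ψ) {C : ℝ} (hC : ∀ x, |ψ x| ≤ C) (a b : ℝ) :
    Integrable (fun x => ((Ici a).indicator (fun _ => (1:ℝ)) x
      - (Ici b).indicator (fun _ => (1:ℝ)) x) * ψ x) volume := by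
  refine (Integrable.sub ?_ ?_).congr (ind_ae a b ψ).symm <;>
    exact (ioc_int hψ hC _ _).integrable_indicator measurableSet_Ioc

lemma aux_ftc {φ ψ : ℝ → ℝ} (hψ : Measurable ψ) {C : ℝ} (hC : ∀ x, |ψ x| ≤ C)
    (hd : ∀ x, HasDerivAt φ (ψ x) x) (a b : ℝ) :
    (∫ x, ((Ici a).indicator (fun _ => (1:ℝ)) x
      - (Ici b).indicator (fun _ => (1:ℝ)) x) * ψ x) = φ b - φ a := by
  have hInt : ∀ u v : ℝ, IntervalIntegrable ψ volume u v :=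
    fun u v => ⟨ioc_int hψ hC _ _, ioc_int hψ hC _ _⟩
  have hftc : (∫ x in a..b, ψ x) = φ b - φ a :=
    intervalIntegral.integral_eq_sub_of_hasDerivAt (fun x _ => hd x) (hInt a b)
  rw [← hftc, intervalIntegral]
  rw [integral_congr_ae (ind_ae a b ψ)]
  rw [integral_sub ((ioc_int hψ hC a b).integrable_indicator measurableSet_Ioc)
    ((ioc_int hψ hC b a).integrable_indicator measurableSet_Ioc),
    integral_indicator measurableSet_Ioc, integral_indicator measurableSet_Ioc]

lemma ind_meas {Ω : Type*} [MeasurableSpace Ω] {f : Ω → ℝ} (hf : Measurable f) :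
    Measurable (fun p : Ω × ℝ => (Ici (f p.1)).indicator (fun _ => (1:ℝ)) p.2) := by
  have : (fun p : Ω × ℝ => (Ici (f p.1)).indicator (fun _ => (1:ℝ)) p.2)
      = Set.indicator {p : Ω × ℝ | f p.1 ≤ p.2} (fun _ => (1:ℝ)) := by
    funext p; simp [Set.indicator_apply, Set.mem_Ici]
  rw [this]
  exact measurable_const.indicator (measurableSet_le (hf.comp measurable_fst) measurable_snd)

lemma aux_core {Ω : Type*} [MeasurableSpace Ω] (ν : Measure Ω) [IsProbabilityMeasure ν]
    (Y D : ℝ → Ω → ℝ)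
    (hderiv : ∀ ω x, HasDerivAt (fun x => Y x ω) (D x ω) x)
    (hDmeas : Measurable (fun p : ℝ × Ω => D p.1 p.2))
    (C : ℝ) (hC0 : 0 ≤ C) (hbd : ∀ x ω, |D x ω| ≤ C)
    (A B : Ω → ℝ) (hA' : Measurable A) (hB' : Measurable B)
    (hAi : Integrable A ν) (hBi : Integrable B ν)
    (hindep : ∀ x : ℝ, IndepFun
      (fun ω => Set.indicator (Set.Ici (A ω)) (fun _ => (1 : ℝ)) x
        - Set.indicator (Set.Ici (B ω)) (fun _ => (1 : ℝ)) x)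
      (fun ω => D x ω) ν) :
    (∫ ω, (Y (B ω) ω - Y (A ω) ω) ∂ν) =
      ∫ x : ℝ, ((ν (A ⁻¹' Set.Iic x)).toReal - (ν (B ⁻¹' Set.Iic x)).toReal)
        * ∫ ω, D x ω ∂ν := by
  set g : ℝ → Ω → ℝ := fun x ω =>
    ((Ici (A ω)).indicator (fun _ => (1:ℝ)) x - (Ici (B ω)).indicator (fun _ => (1:ℝ)) x)
      * D x ω with hg
  have hψ : ∀ ω, Measurable (fun x => D x ω) := fun ω =>
    hDmeas.comp (measurable_id.prodMk measurable_const)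
  -- Step 1: FTC
  have step1 : ∀ ω, (∫ x, g x ω) = Y (B ω) ω - Y (A ω) ω := fun ω =>
    aux_ftc (hψ ω) (fun x => hbd x ω) (fun x => hderiv ω x) (A ω) (B ω)
  -- product measurability
  have hgmeas : Measurable (fun p : Ω × ℝ => g p.2 p.1) :=
    ((ind_meas hA').sub (ind_meas hB')).mul (hDmeas.comp measurable_swap)
  -- the ω-wise integrability in x
  have hgx : ∀ ω, Integrable (fun x => g x ω) volume := fun ω =>
    aux_int (hψ ω) (fun x => hbd x ω) (A ω) (B ω)
  -- pointwise bound and L¹ bound of x-integral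
  have hnormbd : ∀ ω, (∫ x, ‖g x ω‖) ≤ C * (|A ω| + |B ω|) := by
    intro ω
    have hptw : ∀ x, ‖g x ω‖ ≤
        (Icc (min (A ω) (B ω)) (max (A ω) (B ω))).indicator (fun _ => C) x := by
      intro x
      by_cases hx : x ∈ Icc (min (A ω) (B ω)) (max (A ω) (B ω))
      · rw [Set.indicator_of_mem hx]
        have h1 : |(Ici (A ω)).indicator (fun _ => (1:ℝ)) x
            - (Ici (B ω)).indicator (fun _ => (1:ℝ)) x| ≤ 1 := by
          by_cases h1 : A ω ≤ x <;> by_cases h2 : B ω ≤ x <;>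
            simp [Set.indicator_apply, Set.mem_Ici, h1, h2]
        calc ‖g x ω‖ = |(Ici (A ω)).indicator (fun _ => (1:ℝ)) x
              - (Ici (B ω)).indicator (fun _ => (1:ℝ)) x| * |D x ω| := abs_mul _ _
          _ ≤ 1 * C := mul_le_mul h1 (hbd x ω) (abs_nonneg _) zero_le_one
          _ = C := one_mul C
      · rw [Set.indicator_of_notMem hx]
        simp only [Set.mem_Icc, not_and_or, not_le] at hx
        have : ((Ici (A ω)).indicator (fun _ => (1:ℝ)) x
            - (Ici (B ω)).indicator (fun _ => (1:ℝ)) x) = 0 := by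
          rcases hx with hx | hx
          · rw [lt_min_iff] at hx
            simp [Set.indicator_apply, Set.mem_Ici, not_le.mpr hx.1, not_le.mpr hx.2]
          · rw [max_lt_iff] at hx
            simp [Set.indicator_apply, Set.mem_Ici, hx.1.le, hx.2.le]
        simp [hg, this]
    calc (∫ x, ‖g x ω‖)
        ≤ ∫ x, (Icc (min (A ω) (B ω)) (max (A ω) (B ω))).indicator (fun _ => C) x :=
          integral_mono (hgx ω).norm
            (((integrableOn_const_iff).mpr (Or.inr (by
              rw [Real.volume_Icc]; exact ENNReal.ofReal_lt_top))).integrable_indicator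
              measurableSet_Icc) hptw
      _ = (volume (Icc (min (A ω) (B ω)) (max (A ω) (B ω)))).toReal * C := by
          rw [integral_indicator_const _ measurableSet_Icc, smul_eq_mul, measureReal_def]
      _ = (max (A ω) (B ω) - min (A ω) (B ω)) * C := by
          rw [Real.volume_Icc, ENNReal.toReal_ofReal (by
            simp [le_max_iff, min_le_iff, le_total (A ω) (B ω)] )]
      _ ≤ (|A ω| + |B ω|) * C := by
          apply mul_le_mul_of_nonneg_right _ hC0
          rw [max_sub_min_eq_abs]
          rw [abs_sub_comm]; exact abs_sub (A ω) (B ω)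
      _ = C * (|A ω| + |B ω|) := mul_comm _ _
  -- product integrability
  have hgint : Integrable (fun p : Ω × ℝ => g p.2 p.1) (ν.prod volume) := by
    rw [integrable_prod_iff hgmeas.aestronglyMeasurable]
    refine ⟨Filter.Eventually.of_forall fun ω => hgx ω, ?_⟩
    refine Integrable.mono' ((hAi.abs.add hBi.abs).const_mul C)
      hgmeas.norm.aestronglyMeasurable.integral_prod_right' ?_
    refine Filter.Eventually.of_forall fun ω => ?_
    rw [Real.norm_eq_abs, abs_of_nonneg (integral_nonneg fun x => norm_nonneg _)]
    exact hnormbd ω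
  -- Step 4: Fubini
  have step4 : (∫ ω, ∫ x, g x ω ∂volume ∂ν) = ∫ x, ∫ ω, g x ω ∂ν ∂volume :=
    integral_integral_swap hgint
  -- Step 5: independence per x
  have step5 : ∀ x : ℝ, (∫ ω, g x ω ∂ν) =
      ((ν (A ⁻¹' Set.Iic x)).toReal - (ν (B ⁻¹' Set.Iic x)).toReal) * ∫ ω, D x ω ∂ν := by
    intro x
    have hXeq : (fun ω => (Ici (A ω)).indicator (fun _ => (1:ℝ)) x
        - (Ici (B ω)).indicator (fun _ => (1:ℝ)) x)
        = fun ω => (A ⁻¹' Iic x).indicator (fun _ => (1:ℝ)) ω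
          - (B ⁻¹' Iic x).indicator (fun _ => (1:ℝ)) ω := by
      funext ω
      by_cases h1 : A ω ≤ x <;> by_cases h2 : B ω ≤ x <;>
        simp [Set.indicator_apply, Set.mem_Ici, Set.mem_preimage, Set.mem_Iic, h1, h2]
    have hXint : Integrable (fun ω => (Ici (A ω)).indicator (fun _ => (1:ℝ)) x
        - (Ici (B ω)).indicator (fun _ => (1:ℝ)) x) ν := by
      rw [hXeq]
      exact ((integrable_const (1:ℝ)).indicator (hA' measurableSet_Iic)).sub
        ((integrable_const (1:ℝ)).indicator (hB' measurableSet_Iic))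
    have hDint : Integrable (fun ω => D x ω) ν := by
      refine Integrable.mono' (integrable_const C)
        (hDmeas.comp (measurable_const.prodMk measurable_id)).aestronglyMeasurable ?_
      exact Filter.Eventually.of_forall fun ω => hbd x ω
    have h := (hindep x).integral_mul_eq_mul_integral hXint.aestronglyMeasurable hDint.aestronglyMeasurable
    have hL : (∫ ω, g x ω ∂ν) = ∫ ω, ((fun ω => (Ici (A ω)).indicator (fun _ => (1:ℝ)) x
        - (Ici (B ω)).indicator (fun _ => (1:ℝ)) x) * fun ω => D x ω) ω ∂ν := by
      simp [hg, Pi.mul_apply]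
    rw [hL, h]
    congr 1
    rw [hXeq, integral_sub ((integrable_const (1:ℝ)).indicator (hA' measurableSet_Iic))
      ((integrable_const (1:ℝ)).indicator (hB' measurableSet_Iic)),
      integral_indicator_const _ (hA' measurableSet_Iic),
      integral_indicator_const _ (hB' measurableSet_Iic), smul_eq_mul, smul_eq_mul,
      mul_one, mul_one, measureReal_def, measureReal_def]
  calc (∫ ω, (Y (B ω) ω - Y (A ω) ω) ∂ν) = ∫ ω, ∫ x, g x ω ∂volume ∂ν := by
        exact integral_congr_ae (Filter.Eventually.of_forall fun ω => (step1 ω).symm)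
    _ = ∫ x, ∫ ω, g x ω ∂ν ∂volume := step4
    _ = ∫ x : ℝ, ((ν (A ⁻¹' Set.Iic x)).toReal - (ν (B ⁻¹' Set.Iic x)).toReal)
          * ∫ ω, D x ω ∂ν := integral_congr_ae (Filter.Eventually.of_forall step5)

lemma cond_mul_integral {Ω : Type*} [MeasurableSpace Ω] (μ : Measure Ω) [IsProbabilityMeasure μ]
    {s : Set Ω} (hs : MeasurableSet s) (hpos : 0 < μ s) {f : Ω → ℝ} :
    (μ s).toReal * ∫ ω, f ω ∂(μ[|s]) = ∫ ω in s, f ω ∂μ := by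
  rw [ProbabilityTheory.cond, integral_smul_measure, smul_eq_mul, ← mul_assoc,
    ENNReal.toReal_inv, mul_inv_cancel₀, one_mul]
  exact ENNReal.toReal_ne_zero.mpr ⟨hpos.ne', measure_ne_top μ s⟩

lemma aux_part {Ω : Type*} [MeasurableSpace Ω] (μ : Measure Ω) [IsProbabilityMeasure μ]
    {𝒲 : Type*} [Fintype 𝒲] [MeasurableSpace 𝒲] [MeasurableSingletonClass 𝒲]
    (W : Ω → 𝒲) (hW : Measurable W) (hpos : ∀ w : 𝒲, 0 < μ (W ⁻¹' {w}))
    {f : Ω → ℝ} (hf : Integrable f μ) :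
    ∫ ω, f ω ∂μ = ∑ w : 𝒲, (μ (W ⁻¹' {w})).toReal * ∫ ω, f ω ∂(μ[|W ⁻¹' {w}]) := by
  have hms : ∀ w : 𝒲, MeasurableSet (W ⁻¹' {w}) := fun w => hW (measurableSet_singleton w)
  have hU : (⋃ w : 𝒲, W ⁻¹' {w}) = Set.univ := by ext ω; simp
  calc ∫ ω, f ω ∂μ = ∫ ω in ⋃ w : 𝒲, W ⁻¹' {w}, f ω ∂μ := by rw [hU, setIntegral_univ]
    _ = ∑ w : 𝒲, ∫ ω in W ⁻¹' {w}, f ω ∂μ := by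
        refine integral_iUnion_fintype hms ?_ fun w => hf.integrableOn
        intro v w hvw
        exact Set.disjoint_left.mpr fun ω h1 h2 => hvw (by
          simp only [Set.mem_preimage, Set.mem_singleton_iff] at h1 h2; rw [← h1, ← h2])
    _ = ∑ w : 𝒲, (μ (W ⁻¹' {w})).toReal * ∫ ω, f ω ∂(μ[|W ⁻¹' {w}]) := by
        exact Finset.sum_congr rfl fun w _ => (cond_mul_integral μ (hms w) (hpos w)).symm

/-- Theorem 3.1 (identification of CAPCE) with a covariate `W` taking finitely many values:
under joint measurability, uniform boundedness of the partial derivative, and conditional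
independence of the indicator difference and the derivative given each value `w` of `W`,
`𝔼[Y(B) − Y(A)] = ∑_w ℙ(W = w) · ∫ (F_A^w(x) − F_B^w(x)) · 𝔼^w[D(x,·)] dx`,
where `F_A^w` is the conditional CDF and `𝔼^w` the conditional expectation given `W = w`. -/
theorem stmt4 {Ω : Type*} [MeasurableSpace Ω] (μ : Measure Ω) [IsProbabilityMeasure μ]
    {𝒲 : Type*} [Fintype 𝒲] [MeasurableSpace 𝒲] [MeasurableSingletonClass 𝒲]
    (W : Ω → 𝒲) (hW : Measurable W) (hpos : ∀ w : 𝒲, 0 < μ (W ⁻¹' {w}))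
    (Y D : ℝ → Ω → ℝ)
    (hYmeas : Measurable (fun p : ℝ × Ω => Y p.1 p.2))
    (hderiv : ∀ ω x, HasDerivAt (fun x => Y x ω) (D x ω) x)
    (hDmeas : Measurable (fun p : ℝ × Ω => D p.1 p.2))
    (C : ℝ) (hbd : ∀ x ω, |D x ω| ≤ C)
    (A B : Ω → ℝ) (hA : Integrable A μ) (hB : Integrable B μ)
    (hindep : ∀ w : 𝒲, ∀ x : ℝ, IndepFun
      (fun ω => Set.indicator (Set.Ici (A ω)) (fun _ => (1 : ℝ)) x
        - Set.indicator (Set.Ici (B ω)) (fun _ => (1 : ℝ)) x)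
      (fun ω => D x ω) (μ[|W ⁻¹' {w}])) :
    (∫ ω, (Y (B ω) ω - Y (A ω) ω) ∂μ) =
      ∑ w : 𝒲, (μ (W ⁻¹' {w})).toReal *
        ∫ x : ℝ,
          (((μ[|W ⁻¹' {w}]) (A ⁻¹' Set.Iic x)).toReal
            - ((μ[|W ⁻¹' {w}]) (B ⁻¹' Set.Iic x)).toReal) *
          ∫ ω, D x ω ∂(μ[|W ⁻¹' {w}]) := by
  classical
  have hΩ : Nonempty Ω := by
    rcases isEmpty_or_nonempty Ω with h | h
    · exfalso
      have h1 : μ Set.univ = 1 := measure_univ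
      rw [Set.univ_eq_empty_iff.mpr h, measure_empty] at h1
      exact zero_ne_one h1
    · exact h
  have hC0 : (0:ℝ) ≤ C := le_trans (abs_nonneg _) (hbd 0 (Classical.arbitrary Ω))
  -- measurable representatives
  obtain ⟨A', hA'm, hAe⟩ := hA.aemeasurable
  obtain ⟨B', hB'm, hBe⟩ := hB.aemeasurable
  have hAe' : A =ᵐ[μ] A' := hAe
  have hBe' : B =ᵐ[μ] B' := hBe
  have hA2 : Integrable A' μ := hA.congr hAe'
  have hB2 : Integrable B' μ := hB.congr hBe'
  -- integrability of the LHS integrand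
  have hfbd : ∀ ω, ‖Y (B ω) ω - Y (A ω) ω‖ ≤ C * (|A ω| + |B ω|) := by
    intro ω
    have hInt : ∀ u v : ℝ, IntervalIntegrable (fun x => D x ω) volume u v := fun u v =>
      ⟨ioc_int (hDmeas.comp (measurable_id.prodMk measurable_const)) (fun x => hbd x ω) _ _,
       ioc_int (hDmeas.comp (measurable_id.prodMk measurable_const)) (fun x => hbd x ω) _ _⟩
    have hftc : (∫ x in A ω..B ω, D x ω) = Y (B ω) ω - Y (A ω) ω :=
      intervalIntegral.integral_eq_sub_of_hasDerivAt (fun x _ => hderiv ω x) (hInt _ _)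
    rw [← hftc]
    calc ‖∫ x in A ω..B ω, D x ω‖ ≤ C * |B ω - A ω| :=
          intervalIntegral.norm_integral_le_of_norm_le_const fun x _ => hbd x ω
      _ ≤ C * (|A ω| + |B ω|) := by
          apply mul_le_mul_of_nonneg_left _ hC0
          rw [abs_sub_comm]; exact abs_sub (A ω) (B ω)
  have hfmeas : AEStronglyMeasurable (fun ω => Y (B ω) ω - Y (A ω) ω) μ := by
    refine (((hYmeas.comp (hB'm.prodMk measurable_id)).sub
      (hYmeas.comp (hA'm.prodMk measurable_id))).aestronglyMeasurable).congr ?_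
    filter_upwards [hAe', hBe'] with ω h1 h2
    simp only [Function.comp, h1, h2, id, Pi.sub_apply]
  have hfint : Integrable (fun ω => Y (B ω) ω - Y (A ω) ω) μ :=
    Integrable.mono' ((hA.abs.add hB.abs).const_mul C) hfmeas
      (Filter.Eventually.of_forall hfbd)
  rw [aux_part μ W hW hpos hfint]
  refine Finset.sum_congr rfl fun w _ => ?_
  set ν : Measure Ω := μ[|W ⁻¹' {w}] with hν
  have : IsProbabilityMeasure ν := cond_isProbabilityMeasure (hpos w).ne'
  have hle : ae ν ≤ ae μ := cond_absolutelyContinuous.ae_le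
  have hAν : A =ᵐ[ν] A' := hAe'.filter_mono hle
  have hBν : B =ᵐ[ν] B' := hBe'.filter_mono hle
  have hAiν : Integrable A' ν := by
    refine Integrable.congr ?_ hAν
    rw [hν, ProbabilityTheory.cond]
    exact hA.restrict.smul_measure (by simp [(hpos w).ne'])
  have hBiν : Integrable B' ν := by
    refine Integrable.congr ?_ hBν
    rw [hν, ProbabilityTheory.cond]
    exact hB.restrict.smul_measure (by simp [(hpos w).ne'])
  have hindν : ∀ x : ℝ, IndepFun
      (fun ω => Set.indicator (Set.Ici (A' ω)) (fun _ => (1 : ℝ)) x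
        - Set.indicator (Set.Ici (B' ω)) (fun _ => (1 : ℝ)) x)
      (fun ω => D x ω) ν := by
    intro x
    refine (hindep w x).congr ?_ (Filter.EventuallyEq.refl _ _)
    filter_upwards [hAν, hBν] with ω h1 h2
    rw [h1, h2]
  have hcore := aux_core ν Y D hderiv hDmeas C hC0 hbd A' B' hA'm hB'm hAiν hBiν hindν
  have hsetA : ∀ x : ℝ, ν (A ⁻¹' Set.Iic x) = ν (A' ⁻¹' Set.Iic x) := by
    intro x
    apply measure_congr
    filter_upwards [hAν] with ω h
    change (A ω ∈ Iic x) = (A' ω ∈ Iic x)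
    rw [h]
  have hsetB : ∀ x : ℝ, ν (B ⁻¹' Set.Iic x) = ν (B' ⁻¹' Set.Iic x) := by
    intro x
    apply measure_congr
    filter_upwards [hBν] with ω h
    change (B ω ∈ Iic x) = (B' ω ∈ Iic x)
    rw [h]
  congr 1
  calc (∫ ω, (Y (B ω) ω - Y (A ω) ω) ∂ν)
      = ∫ ω, (Y (B' ω) ω - Y (A' ω) ω) ∂ν := by
        refine integral_congr_ae ?_
        filter_upwards [hAν, hBν] with ω h1 h2
        rw [h1, h2]
    _ = ∫ x : ℝ, ((ν (A' ⁻¹' Set.Iic x)).toReal - (ν (B' ⁻¹' Set.Iic x)).toReal)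
          * ∫ ω, D x ω ∂ν := hcore
    _ = ∫ x : ℝ, ((ν (A ⁻¹' Set.Iic x)).toReal - (ν (B ⁻¹' Set.Iic x)).toReal)
          * ∫ ω, D x ω ∂ν := by
        refine integral_congr_ae (Filter.Eventually.of_forall fun x => ?_)
        simp only [hsetA x, hsetB x]
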